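/- For f(x) = f₀ + m₁/|x − a| + m₂/|x + a| with a ≠ 0, the condition (n × ∇f(x)) · x = 0 for all x outside {±a} holds if n is parallel to a. -/

import Mathlib

open Matrix BigOperators

noncomputable section

abbrev V3 := Fin 3 → ℝ

def pd (f : V3 → ℝ) (i : Fin 3) (x : V3) : ℝ := fderiv ℝ f x (Pi.single i 1)

def grad (f : V3 → ℝ) (x : V3) : V3 := fun i => pd f i x

def norm3 (x : V3) : ℝ := Real.sqrt (∑ i, x i ^ 2)

lemma sq_sum_pos (x p : V3) (h : x ≠ p) : 0 < ∑ i, (x i - p i)^2 := by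
  have : ∃ i, x i ≠ p i := by
    by_contra hc; push_neg at hc; exact h (funext hc)
  obtain ⟨i, hi⟩ := this
  have hi' : x i - p i ≠ 0 := sub_ne_zero.mpr hi
  exact Finset.sum_pos' (fun j _ => sq_nonneg _) ⟨i, Finset.mem_univ i, by positivity⟩

lemma norm3_sub_pos (x p : V3) (h : x ≠ p) : 0 < norm3 (x - p) := by
  have := sq_sum_pos x p h
  simp only [norm3, Pi.sub_apply]
  positivity

def Dmat (p x : V3) : V3 →L[ℝ] ℝ :=
  (-(1 / (2 * norm3 (x - p))) / (norm3 (x - p)) ^ 2) •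
    (∑ j, (2 * (x j - p j) ^ 1) •
      (ContinuousLinearMap.proj (R := ℝ) (φ := fun _ : Fin 3 => ℝ) j))

lemma hasFDerivAt_invnorm (p x : V3) (h : x ≠ p) :
    HasFDerivAt (fun y => 1 / norm3 (y - p)) (Dmat p x) x := by
  rw [Dmat]
  have hq : HasFDerivAt (fun y : V3 => ∑ j, (y j - p j) ^ 2)
      (∑ j, (2 * (x j - p j) ^ 1) •
        (ContinuousLinearMap.proj (R := ℝ) (φ := fun _ : Fin 3 => ℝ) j)) x := by
    apply HasFDerivAt.fun_sum
    intro j _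
    have hp : HasFDerivAt (fun y : V3 => y j)
        (ContinuousLinearMap.proj (R := ℝ) (φ := fun _ : Fin 3 => ℝ) j) x :=
      hasFDerivAt_apply j x
    have hsq : HasDerivAt (fun t : ℝ => (t - p j) ^ 2) (2 * (x j - p j) ^ 1) (x j) := by
      simpa using ((hasDerivAt_id (x j)).sub_const (p j)).fun_pow 2
    exact hsq.comp_hasFDerivAt x hp
  have hqpos : 0 < ∑ j, (x j - p j) ^ 2 := sq_sum_pos x p h
  have hsne : Real.sqrt (∑ j, (x j - p j) ^ 2) ≠ 0 := by positivity
  have hg : HasDerivAt (fun t : ℝ => (Real.sqrt t)⁻¹)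
      (-(1 / (2 * Real.sqrt (∑ j, (x j - p j) ^ 2))) /
        (Real.sqrt (∑ j, (x j - p j) ^ 2)) ^ 2) (∑ j, (x j - p j) ^ 2) :=
    (Real.hasDerivAt_sqrt (ne_of_gt hqpos)).inv hsne
  have hcomp := hg.comp_hasFDerivAt x hq
  have hn3 : norm3 (x - p) = Real.sqrt (∑ j, (x j - p j) ^ 2) := by
    simp [norm3]
  have hfun : (fun y : V3 => 1 / norm3 (y - p)) =
      ((fun t => (Real.sqrt t)⁻¹) ∘ fun y : V3 => ∑ j, (y j - p j) ^ 2) := by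
    funext y
    simp [norm3, one_div]
  rw [hn3, hfun]
  exact hcomp

lemma pd_invnorm (p x : V3) (h : x ≠ p) (i : Fin 3) :
    pd (fun y => 1 / norm3 (y - p)) i x = -(x i - p i) / (norm3 (x - p)) ^ 3 := by
  have hD := hasFDerivAt_invnorm p x h
  have hne : norm3 (x - p) ≠ 0 := ne_of_gt (norm3_sub_pos x p h)
  rw [pd, hD.fderiv, Dmat]
  simp only [ContinuousLinearMap.smul_apply, ContinuousLinearMap.sum_apply,
    ContinuousLinearMap.proj_apply, Pi.single_apply, smul_eq_mul, mul_ite, mul_one, mul_zero,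
    Finset.sum_ite_eq', Finset.mem_univ, if_true]
  field_simp

/-- for the two-center function
f(x) = f₀ + m₁/|x − a| + m₂/|x + a| with a ≠ 0, if n is parallel to a then
(n × ∇f(x)) · x = 0 for all x outside {a, −a}. -/
theorem two_center_axial_rotation (f₀ m₁ m₂ : ℝ) (a n : V3) (ha : a ≠ 0)
    (f : V3 → ℝ)
    (hf : ∀ x, f x = f₀ + m₁ / norm3 (x - a) + m₂ / norm3 (x + a))
    (hn : ∃ c : ℝ, n = c • a) :
    ∀ x : V3, x ≠ a → x ≠ -a → (crossProduct n (grad f x)) ⬝ᵥ x = 0 := by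
  obtain ⟨c, rfl⟩ := hn
  intro x hx1 hx2
  have hfe : f = fun y => f₀ + m₁ * (1 / norm3 (y - a)) + m₂ * (1 / norm3 (y - (-a))) := by
    funext y
    rw [hf y]
    simp [sub_neg_eq_add, div_eq_mul_inv, one_div]
  have h1 := hasFDerivAt_invnorm a x hx1
  have h2 := hasFDerivAt_invnorm (-a) x hx2
  have hD : HasFDerivAt f (m₁ • Dmat a x + m₂ • Dmat (-a) x) x := by
    rw [hfe]
    have := ((hasFDerivAt_const f₀ x).fun_add (h1.const_mul m₁)).fun_add (h2.const_mul m₂)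
    simpa [add_assoc] using this
  have hpd : ∀ i, pd f i x =
      m₁ * (-(x i - a i) / (norm3 (x - a)) ^ 3) +
      m₂ * (-(x i + a i) / (norm3 (x + a)) ^ 3) := by
    intro i
    have e1 : pd (fun y => 1 / norm3 (y - a)) i x = -(x i - a i) / (norm3 (x - a)) ^ 3 :=
      pd_invnorm a x hx1 i
    have e2 : pd (fun y => 1 / norm3 (y - (-a))) i x = -(x i + a i) / (norm3 (x + a)) ^ 3 := by
      have := pd_invnorm (-a) x hx2 i
      simpa [sub_neg_eq_add] using this
    calc pd f i x = m₁ * pd (fun y => 1 / norm3 (y - a)) i x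
          + m₂ * pd (fun y => 1 / norm3 (y - (-a))) i x := by
          rw [pd, hD.fderiv, pd, (hasFDerivAt_invnorm a x hx1).fderiv,
            pd, (hasFDerivAt_invnorm (-a) x hx2).fderiv]
          simp [smul_eq_mul]
      _ = _ := by rw [e1, e2]
  have r1 : norm3 (x - a) ≠ 0 := ne_of_gt (norm3_sub_pos x a hx1)
  have r2 : norm3 (x + a) ≠ 0 := by
    have := norm3_sub_pos x (-a) hx2
    rw [sub_neg_eq_add] at this
    exact ne_of_gt this
  simp only [cross_apply, dotProduct, Fin.sum_univ_three, grad, hpd,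
    Matrix.cons_val_zero, Matrix.cons_val_one, Matrix.head_cons,
    Matrix.cons_val_two, Matrix.tail_cons, Pi.smul_apply, smul_eq_mul]
  field_simp
  ring
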